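/- arXiv:1610.06248 — 2 statements merged into one kernel-verified Lean document; each statement's English description precedes it below -/
import Mathlib

section
/- Let μ be a probability measure on ℂ with compact support, and suppose X_1, X_2, … are independent and identically distributed random variables with distribution μ. Fix ε > 0. Then, almost surely, for all sufficiently large n, the polynomial p_n(z) := ∏_{j=1}^n (z − X_j) has no critical points (roots of p_n') outside the set N_μ(ε). -/
open MeasureTheory ProbabilityTheory Filter Polynomial
open Topology

noncomputable section

/-- The support of a measure on ℂ: points all of whose neighborhoods have positive measure. -/
def measSupp (μ : Measure ℂ) : Set ℂ := {x | ∀ U ∈ nhds x, μ U ≠ 0}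

/-- The Cauchy–Stieltjes transform m_μ(z) = ∫ dμ(x)/(z − x). -/
def stieltjes (μ : Measure ℂ) (z : ℂ) : ℂ := ∫ x, (z - x)⁻¹ ∂μ

/-- M_μ : the zero set of the Cauchy–Stieltjes transform outside the support of μ. -/
def Mset (μ : Measure ℂ) : Set ℂ := {z | z ∉ measSupp μ ∧ stieltjes μ z = 0}

/-- N_μ(ε) : the ε-neighborhood of supp(μ) ∪ M_μ. -/
def Nset (μ : Measure ℂ) (ε : ℝ) : Set ℂ :=
  {z | Metric.infDist z (measSupp μ ∪ Mset μ) < ε}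

namespace NoOutliersAux

lemma measSupp_compl (μ : Measure ℂ) :
    (measSupp μ)ᶜ = ⋃₀ {V : Set ℂ | IsOpen V ∧ μ V = 0} := by
  ext x
  simp only [measSupp, Set.mem_compl_iff, Set.mem_setOf_eq, not_forall, Set.mem_sUnion]
  constructor
  · rintro ⟨U, hU, hU0⟩
    rw [not_not] at hU0
    obtain ⟨V, hVU, hVopen, hxV⟩ := _root_.mem_nhds_iff.1 hU
    exact ⟨V, ⟨hVopen, measure_mono_null hVU hU0⟩, hxV⟩
  · rintro ⟨V, ⟨hVopen, hV0⟩, hxV⟩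
    exact ⟨V, hVopen.mem_nhds hxV, not_not.2 hV0⟩

lemma isClosed_measSupp (μ : Measure ℂ) : IsClosed (measSupp μ) := by
  rw [← isOpen_compl_iff, measSupp_compl]
  exact isOpen_sUnion fun V hV => hV.1

lemma measSupp_compl_null (μ : Measure ℂ) : μ (measSupp μ)ᶜ = 0 := by
  rw [measSupp_compl]
  obtain ⟨T, hTc, hTS, hTU⟩ := TopologicalSpace.isOpen_sUnion_countable
    {V : Set ℂ | IsOpen V ∧ μ V = 0} (fun s hs => hs.1)
  rw [← hTU]
  exact (measure_sUnion_null_iff hTc).2 fun s hs => (hTS hs).2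

lemma measSupp_nonempty (μ : Measure ℂ) [IsProbabilityMeasure μ] :
    (measSupp μ).Nonempty := by
  rw [Set.nonempty_iff_ne_empty]
  intro h
  have := measSupp_compl_null μ
  rw [h, Set.compl_empty, measure_univ] at this
  simp at this

lemma ae_mem_measSupp (μ : Measure ℂ) : ∀ᵐ x ∂μ, x ∈ measSupp μ := by
  rw [ae_iff]
  exact measSupp_compl_null μ

lemma inv_norm_le {z x : ℂ} {d : ℝ} (hd : 0 < d) (h : d ≤ dist z x) :
    ‖(z - x)⁻¹‖ ≤ d⁻¹ := by
  rw [norm_inv]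
  have h2 : ‖z - x‖ = dist z x := (dist_eq_norm z x).symm
  rw [h2]
  exact inv_anti₀ hd h

lemma inv_sub_inv_norm {z w x : ℂ} {d : ℝ} (hd : 0 < d)
    (h1 : d ≤ dist z x) (h2 : d ≤ dist w x) :
    ‖(z - x)⁻¹ - (w - x)⁻¹‖ ≤ dist z w / d ^ 2 := by
  have hz : z - x ≠ 0 := by
    intro h; rw [sub_eq_zero] at h; subst h; simp at h1; linarith
  have hw : w - x ≠ 0 := by
    intro h; rw [sub_eq_zero] at h; subst h; simp at h2; linarith
  have key : (z - x)⁻¹ - (w - x)⁻¹ = (w - z) / ((z - x) * (w - x)) := by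
    field_simp
    ring
  rw [key, norm_div, norm_mul]
  have e1 : ‖z - x‖ = dist z x := (dist_eq_norm z x).symm
  have e2 : ‖w - x‖ = dist w x := (dist_eq_norm w x).symm
  have e3 : ‖w - z‖ = dist z w := by rw [← dist_eq_norm, dist_comm]
  rw [e1, e2, e3, pow_two]
  gcongr <;> first | exact h1 | exact h2 | positivity

lemma re_mul_inv_pos {z a : ℂ} (h : ‖a‖ < ‖z‖) :
    0 < (z * (z - a)⁻¹).re := by
  have hza : z - a ≠ 0 := by
    intro hh; rw [sub_eq_zero] at hh; subst hh; exact lt_irrefl _ h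
  rw [Complex.inv_def, ← mul_assoc]
  have hns : 0 < Complex.normSq (z - a) := Complex.normSq_pos.2 hza
  rw [Complex.ofReal_inv]
  have hre : (z * (starRingEnd ℂ) (z - a) * (↑(Complex.normSq (z - a)))⁻¹).re
      = (z * (starRingEnd ℂ) (z - a)).re * (Complex.normSq (z - a))⁻¹ := by
    rw [Complex.mul_re]
    simp [Complex.ofReal_re, Complex.ofReal_im]
  rw [hre]
  apply mul_pos _ (inv_pos.2 hns)
  have expand : z * (starRingEnd ℂ) (z - a) = z * (starRingEnd ℂ) z - z * (starRingEnd ℂ) a := by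
    rw [map_sub, mul_sub]
  rw [expand, Complex.sub_re, Complex.mul_conj]
  have h1 : (z * (starRingEnd ℂ) a).re ≤ ‖z‖ * ‖a‖ := by
    calc (z * (starRingEnd ℂ) a).re ≤ ‖z * (starRingEnd ℂ) a‖ := Complex.re_le_norm _
    _ = ‖z‖ * ‖a‖ := by rw [norm_mul, Complex.norm_conj]
  have h2 : ‖z‖ * ‖a‖ < ‖z‖ * ‖z‖ := by
    have hz0 : 0 < ‖z‖ := lt_of_le_of_lt (norm_nonneg a) h
    exact mul_lt_mul_of_pos_left h hz0
  have h3 : Complex.normSq z = ‖z‖ * ‖z‖ := by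
    rw [Complex.normSq_eq_norm_sq, pow_two]
  simp only [Complex.ofReal_re]
  rw [h3]
  linarith

lemma deriv_eval_eq {n : ℕ} (a : ℕ → ℂ) (z : ℂ) (hz : ∀ j ∈ Finset.range n, z - a j ≠ 0) :
    ((∏ j ∈ Finset.range n, (X - C (a j))).derivative).eval z
      = (∏ j ∈ Finset.range n, (z - a j)) * ∑ j ∈ Finset.range n, (z - a j)⁻¹ := by
  induction n with
  | zero => simp
  | succ n ih =>
    have hzn : z - a n ≠ 0 := hz n (Finset.self_mem_range_succ n)
    have hz' : ∀ j ∈ Finset.range n, z - a j ≠ 0 := fun j hj =>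
      hz j (Finset.mem_range_succ_iff.2 (le_of_lt (Finset.mem_range.1 hj)))
    rw [Finset.prod_range_succ, derivative_mul, eval_add, eval_mul, eval_mul, ih hz',
      Finset.prod_range_succ, Finset.sum_range_succ]
    simp only [derivative_sub, derivative_X, derivative_C, sub_zero, eval_one, mul_one,
      eval_sub, eval_X, eval_C, eval_prod]
    field_simp

lemma integrable_inv_sub (μ : Measure ℂ) [IsProbabilityMeasure μ] {z : ℂ} {d : ℝ}
    (hd : 0 < d) (hz : ∀ x ∈ measSupp μ, d ≤ dist z x) :
    Integrable (fun x => (z - x)⁻¹) μ := by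
  apply (integrable_const (d⁻¹)).mono'
  · exact ((measurable_const.sub measurable_id).inv).aestronglyMeasurable
  · filter_upwards [ae_mem_measSupp μ] with x hx
    exact inv_norm_le hd (hz x hx)

lemma stieltjes_diff_le (μ : Measure ℂ) [IsProbabilityMeasure μ] {z w : ℂ} {d : ℝ}
    (hd : 0 < d) (hz : ∀ x ∈ measSupp μ, d ≤ dist z x)
    (hw : ∀ x ∈ measSupp μ, d ≤ dist w x) :
    ‖stieltjes μ z - stieltjes μ w‖ ≤ dist z w / d ^ 2 := by
  rw [stieltjes, stieltjes,
    ← integral_sub (integrable_inv_sub μ hd hz) (integrable_inv_sub μ hd hw)]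
  have hconst : ∫ (_ : ℂ), dist z w / d ^ 2 ∂μ = dist z w / d ^ 2 := by
    simp
  rw [← hconst]
  apply norm_integral_le_of_norm_le (integrable_const _)
  filter_upwards [ae_mem_measSupp μ] with x hx
  exact inv_sub_inv_norm hd (hz x hx) (hw x hx)

lemma slln_point {Ω : Type*} [MeasurableSpace Ω] (P : Measure Ω) [IsProbabilityMeasure P]
    (μ : Measure ℂ) [IsProbabilityMeasure μ]
    (X : ℕ → Ω → ℂ) (hmeas : ∀ j, Measurable (X j))
    (hdist : ∀ j, Measure.map (X j) P = μ)
    (hindep : iIndepFun X P)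
    {c : ℂ} {d : ℝ} (hd : 0 < d) (hc : ∀ x ∈ measSupp μ, d ≤ dist c x) :
    ∀ᵐ ω ∂P, Tendsto (fun n : ℕ => (n : ℝ)⁻¹ • ∑ j ∈ Finset.range n, (c - X j ω)⁻¹)
      atTop (𝓝 (stieltjes μ c)) := by
  set f : ℂ → ℂ := fun x => (c - x)⁻¹ with hf
  have hfm : Measurable f := (measurable_const.sub measurable_id).inv
  have hμint : Integrable f μ := integrable_inv_sub μ hd hc
  have hint : Integrable (f ∘ X 0) P := by
    rw [← hdist 0] at hμint
    exact (integrable_map_measure hfm.aestronglyMeasurable (hmeas 0).aemeasurable).1 hμint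
  have hmap : ∀ j, Measure.map (f ∘ X j) P = Measure.map f μ := fun j => by
    rw [← Measure.map_map hfm (hmeas j), hdist j]
  have hident : ∀ i, IdentDistrib (f ∘ X i) (f ∘ X 0) P P := fun i =>
    ⟨(hfm.comp (hmeas i)).aemeasurable, (hfm.comp (hmeas 0)).aemeasurable,
      by rw [hmap i, hmap 0]⟩
  have hindep' : Pairwise (Function.onFun (fun a b => IndepFun a b P) (fun i => f ∘ X i)) := fun i j hij =>
    (hindep.indepFun hij).comp hfm hfm
  have hexp : P[f ∘ X 0] = stieltjes μ c := by
    have h1 : stieltjes μ c = ∫ y, f y ∂(Measure.map (X 0) P) := by rw [hdist 0]; rfl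
    rw [h1, integral_map (hmeas 0).aemeasurable hfm.aestronglyMeasurable]
    rfl
  have hsl := strong_law_ae (fun i => f ∘ X i) hint hindep' hident
  rw [hexp] at hsl
  filter_upwards [hsl] with ω hω
  exact hω

end NoOutliersAux

open NoOutliersAux

/-- **Corollary (no outliers, almost sure version).**
Let μ be a compactly supported probability measure on ℂ and X₁, X₂, … iid with
distribution μ.  Fix ε > 0.  Then almost surely, for all sufficiently large n, the
polynomial pₙ(z) = ∏_{j=1}^n (z − X_j) has no critical points outside N_μ(ε). -/
theorem no_outliers_unperturbed_almost_sure
    {Ω : Type*} [MeasurableSpace Ω] (P : Measure Ω) [IsProbabilityMeasure P]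
    (μ : Measure ℂ) [IsProbabilityMeasure μ] (hsupp : IsCompact (measSupp μ))
    (X : ℕ → Ω → ℂ) (hmeas : ∀ j, Measurable (X j))
    (hdist : ∀ j, Measure.map (X j) P = μ)
    (hindep : iIndepFun X P)
    (ε : ℝ) (hε : 0 < ε) :
    ∀ᵐ ω ∂P, ∀ᶠ n in atTop,
      ∀ z ∈ ((∏ j ∈ Finset.range n,
          (Polynomial.X - Polynomial.C (X j ω))).derivative).roots,
        z ∈ Nset μ ε := by
  classical
  set K : Set ℂ := measSupp μ with hK
  set S : Set ℂ := measSupp μ ∪ Mset μ with hS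
  have hKne : K.Nonempty := measSupp_nonempty μ
  obtain ⟨R, hR⟩ : ∃ R : ℝ, ∀ x ∈ K, ‖x‖ ≤ R := by
    obtain ⟨R, hR⟩ := hsupp.isBounded.subset_closedBall 0
    refine ⟨R, fun x hx => ?_⟩
    have := hR hx
    rwa [Metric.mem_closedBall, Complex.dist_eq, sub_zero] at this
  set C : Set ℂ := Metric.closedBall 0 R ∩ {z | ε ≤ Metric.infDist z S} with hC
  have hCright : IsClosed {z : ℂ | ε ≤ Metric.infDist z S} :=
    isClosed_le continuous_const (Metric.continuous_infDist_pt S)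
  have hCcompact : IsCompact C := (isCompact_closedBall 0 R).inter_right hCright
  have hCK : ∀ z ∈ C, ∀ x ∈ K, ε ≤ dist z x := by
    intro z hz x hx
    calc ε ≤ Metric.infDist z S := hz.2
    _ ≤ Metric.infDist z K :=
        Metric.infDist_le_infDist_of_subset Set.subset_union_left hKne
    _ ≤ dist z x := Metric.infDist_le_dist_of_mem hx
  have hm0 : ∀ z ∈ C, stieltjes μ z ≠ 0 := by
    intro z hz h0
    have hznS : z ∉ S := by
      intro h
      have := Metric.infDist_zero_of_mem h
      have h2 : ε ≤ Metric.infDist z S := hz.2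
      rw [this] at h2
      linarith
    exact hznS (Or.inr ⟨fun hzK => hznS (Or.inl hzK), h0⟩)
  obtain ⟨δ, hδpos, hδ⟩ : ∃ δ : ℝ, 0 < δ ∧ ∀ z ∈ C, δ ≤ ‖stieltjes μ z‖ := by
    rcases C.eq_empty_or_nonempty with hCe | hCne
    · exact ⟨1, one_pos, by simp [hCe]⟩
    · have hlipC : LipschitzOnWith ((ε ^ 2)⁻¹).toNNReal (stieltjes μ) C := by
        rw [lipschitzOnWith_iff_dist_le_mul]
        intro z hz w hw
        rw [dist_eq_norm]
        calc ‖stieltjes μ z - stieltjes μ w‖ ≤ dist z w / ε ^ 2 :=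
              stieltjes_diff_le μ hε (hCK z hz) (hCK w hw)
        _ = (ε ^ 2)⁻¹ * dist z w := by ring
        _ = (((ε ^ 2)⁻¹).toNNReal : ℝ) * dist z w := by
              rw [Real.coe_toNNReal _ (by positivity)]
      have hcont : ContinuousOn (fun z => ‖stieltjes μ z‖) C :=
        continuous_norm.comp_continuousOn hlipC.continuousOn
      obtain ⟨z₀, hz₀C, hz₀min⟩ := hCcompact.exists_isMinOn hCne hcont
      exact ⟨_, norm_pos_iff.2 (hm0 z₀ hz₀C), fun z hz => hz₀min hz⟩
  set r : ℝ := ε ^ 2 * δ / 4 with hr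
  have hrpos : 0 < r := by positivity
  obtain ⟨t, htC, htcover⟩ := hCcompact.elim_nhds_subcover (fun c => Metric.ball c r)
    (fun c _ => Metric.ball_mem_nhds c hrpos)
  have hXK : ∀ᵐ ω ∂P, ∀ j, X j ω ∈ K := by
    rw [ae_all_iff]
    intro j
    have hpre : P ((X j) ⁻¹' Kᶜ) = 0 := by
      rw [← Measure.map_apply (hmeas j) (isClosed_measSupp μ).measurableSet.compl, hdist j]
      exact measSupp_compl_null μ
    rw [ae_iff]
    exact hpre
  have hT : ∀ᵐ ω ∂P, ∀ c ∈ t,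
      Tendsto (fun n : ℕ => (n : ℝ)⁻¹ • ∑ j ∈ Finset.range n, (c - X j ω)⁻¹)
        atTop (𝓝 (stieltjes μ c)) := by
    refine (ae_ball_iff t.countable_toSet).2 fun c hc => ?_
    exact slln_point P μ X hmeas hdist hindep hε (hCK c (htC c hc))
  filter_upwards [hXK, hT] with ω hωK hωT
  have hTn : ∀ᶠ n : ℕ in atTop, ∀ c ∈ t,
      dist ((n : ℝ)⁻¹ • ∑ j ∈ Finset.range n, (c - X j ω)⁻¹) (stieltjes μ c) < δ / 4 := by
    rw [eventually_all_finset]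
    intro c hc
    obtain ⟨N, hN⟩ := Metric.tendsto_atTop.1 (hωT c hc) (δ / 4) (by positivity)
    exact eventually_atTop.2 ⟨N, hN⟩
  filter_upwards [hTn, eventually_ge_atTop 1] with n hn hn1
  intro z hzroot
  by_contra hzN
  have hzd : ε ≤ Metric.infDist z S := by
    rw [Nset] at hzN
    exact not_lt.1 hzN
  have hzX : ∀ j ∈ Finset.range n, z - X j ω ≠ 0 := by
    intro j hj h0
    rw [sub_eq_zero] at h0
    have hzS : z ∈ S := Or.inl (h0 ▸ hωK j)
    have := Metric.infDist_zero_of_mem hzS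
    rw [this] at hzd
    linarith
  have hroot : ((∏ j ∈ Finset.range n,
      (Polynomial.X - Polynomial.C (X j ω))).derivative).eval z = 0 :=
    (Polynomial.mem_roots'.1 hzroot).2
  rw [deriv_eval_eq _ _ hzX] at hroot
  have hprod : (∏ j ∈ Finset.range n, (z - X j ω)) ≠ 0 :=
    Finset.prod_ne_zero_iff.2 hzX
  have hsum0 : ∑ j ∈ Finset.range n, (z - X j ω)⁻¹ = 0 := by
    rcases mul_eq_zero.1 hroot with h | h
    · exact absurd h hprod
    · exact h
  have hzR : ‖z‖ ≤ R := by
    by_contra hzR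
    push_neg at hzR
    have hpos : 0 < (z * ∑ j ∈ Finset.range n, (z - X j ω)⁻¹).re := by
      rw [Finset.mul_sum, Complex.re_sum]
      apply Finset.sum_pos
      · intro j _
        exact re_mul_inv_pos (lt_of_le_of_lt (hR _ (hωK j)) hzR)
      · exact Finset.nonempty_range_iff.2 (by omega)
    rw [hsum0, mul_zero] at hpos
    simp at hpos
  have hzC : z ∈ C := ⟨Metric.mem_closedBall.2 (by rwa [Complex.dist_eq, sub_zero]), hzd⟩
  obtain ⟨c, hct, hzc⟩ : ∃ c ∈ t, z ∈ Metric.ball c r := by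
    have := htcover hzC
    simpa using this
  have hcC : c ∈ C := htC c hct
  have hlipemp : ‖(n : ℝ)⁻¹ • ∑ j ∈ Finset.range n, (c - X j ω)⁻¹‖ ≤ dist c z / ε ^ 2 := by
    have heq : (n : ℝ)⁻¹ • ∑ j ∈ Finset.range n, (c - X j ω)⁻¹
        = (n : ℝ)⁻¹ • ∑ j ∈ Finset.range n, ((c - X j ω)⁻¹ - (z - X j ω)⁻¹) := by
      rw [Finset.sum_sub_distrib, hsum0, sub_zero]
    rw [heq, norm_smul]
    have hsumle : ‖∑ j ∈ Finset.range n, ((c - X j ω)⁻¹ - (z - X j ω)⁻¹)‖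
        ≤ ∑ _j ∈ Finset.range n, (dist c z / ε ^ 2) :=
      norm_sum_le_of_le _ fun j _ =>
        inv_sub_inv_norm hε (hCK c hcC _ (hωK j)) (hCK z hzC _ (hωK j))
    rw [Finset.sum_const, Finset.card_range, nsmul_eq_mul] at hsumle
    have hn0 : (0:ℝ) < (n : ℝ) := by exact_mod_cast hn1
    calc ‖(n : ℝ)⁻¹‖ * ‖∑ j ∈ Finset.range n, ((c - X j ω)⁻¹ - (z - X j ω)⁻¹)‖
        ≤ (n : ℝ)⁻¹ * ((n : ℝ) * (dist c z / ε ^ 2)) := by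
          rw [Real.norm_eq_abs, abs_of_pos (inv_pos.2 hn0)]
          exact mul_le_mul_of_nonneg_left hsumle (by positivity)
    _ = dist c z / ε ^ 2 := by field_simp
  have hczr : dist c z < r := by rw [dist_comm]; exact Metric.mem_ball.1 hzc
  have hcz4 : dist c z / ε ^ 2 < δ / 4 := by
    rw [div_lt_iff₀ (by positivity : (0:ℝ) < ε ^ 2)]
    calc dist c z < r := hczr
    _ = δ / 4 * ε ^ 2 := by rw [hr]; ring
  have hclose : dist ((n : ℝ)⁻¹ • ∑ j ∈ Finset.range n, (c - X j ω)⁻¹) (stieltjes μ c)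
      < δ / 4 := hn c hct
  have hfinal : ‖stieltjes μ c‖ < δ / 2 := by
    set a := (n : ℝ)⁻¹ • ∑ j ∈ Finset.range n, (c - X j ω)⁻¹ with ha
    calc ‖stieltjes μ c‖ = ‖stieltjes μ c‖ := rfl
    _ = ‖stieltjes μ c - a + a‖ := by ring_nf
    _ ≤ ‖stieltjes μ c - a‖ + ‖a‖ := norm_add_le _ _
    _ < δ / 4 + δ / 4 := by
        apply add_lt_add_of_lt_of_le
        · rw [← dist_eq_norm, dist_comm]
          exact hclose
        · exact le_of_lt (lt_of_le_of_lt hlipemp hcz4)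
    _ = δ / 2 := by ring
  have := hδ c hcC
  linarith

end
end

section
/- There exist absolute constants C, c > 0 with the following property. Let μ be a probability measure on ℂ with compact support, and suppose X_1, …, X_n are independent and identically distributed random variables with distribution μ. Then for every M, ε, t > 0, P( sup_{z ∈ ℂ : |z| ≤ M, dist(z, supp(μ)) ≥ ε} | (1/n) Σ_{j=1}^n 1/(z − X_j) − m_μ(z) | ≥ t ) ≤ C (1 + 40M/(ε² t)) exp(−c n t² ε²). -/
open MeasureTheory ProbabilityTheory Filter

noncomputable section

section Aux
open Real Metric

lemma isClosed_measSupp (μ : Measure ℂ) : IsClosed (measSupp μ) := by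
  rw [← isOpen_compl_iff, isOpen_iff_mem_nhds]
  intro x hx
  simp only [measSupp, Set.mem_compl_iff, Set.mem_setOf_eq, not_forall] at hx
  obtain ⟨U, hU, hU0⟩ := hx
  rcases _root_.mem_nhds_iff.1 hU with ⟨V, hVU, hV, hxV⟩
  refine Filter.mem_of_superset (hV.mem_nhds hxV) ?_
  intro y hy
  simp only [measSupp, Set.mem_compl_iff, Set.mem_setOf_eq, not_forall]
  exact ⟨V, hV.mem_nhds hy, fun h => h (measure_mono_null hVU (not_not.1 hU0))⟩

lemma measSupp_compl_null (μ : Measure ℂ) : μ (measSupp μ)ᶜ = 0 := by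
  obtain ⟨b, hbc, -, hb⟩ := TopologicalSpace.exists_countable_basis ℂ
  have : (measSupp μ)ᶜ ⊆ ⋃₀ {U ∈ b | μ U = 0} := by
    intro x hx
    simp only [measSupp, Set.mem_compl_iff, Set.mem_setOf_eq, not_forall] at hx
    obtain ⟨U, hU, hU0⟩ := hx
    obtain ⟨V, hVb, hxV, hVU⟩ := hb.mem_nhds_iff.1 hU
    exact ⟨V, ⟨hVb, measure_mono_null hVU (not_not.1 hU0)⟩, hxV⟩
  refine measure_mono_null this ?_
  rw [measure_sUnion_null_iff (hbc.mono (Set.sep_subset _ _))]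
  exact fun U hU => hU.2

lemma exp_le_one_add_sq {x : ℝ} (hx : |x| ≤ 1) : Real.exp x ≤ 1 + x + x ^ 2 := by
  have h := Real.exp_bound hx (n := 2) (by norm_num)
  have h2 : ∑ m ∈ Finset.range 2, x ^ m / m.factorial = 1 + x := by
    simp [Finset.sum_range_succ]
  rw [h2] at h
  have := (abs_sub_le_iff.1 h).1
  have hx2 : |x| ^ 2 = x ^ 2 := sq_abs x
  rw [hx2] at this
  norm_num [Nat.factorial] at this
  nlinarith [sq_nonneg x]



set_option maxHeartbeats 1000000 in
lemma chernoff_bd {Ω : Type} [mΩ : MeasurableSpace Ω] (P : Measure Ω) [IsProbabilityMeasure P]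
    (Z : ℕ → Ω → ℝ) (hmeas : ∀ j, Measurable (Z j))
    (hindep : iIndepFun Z P)
    {B : ℝ} (hB : 0 < B) (hbd : ∀ j, ∀ᵐ ω ∂P, |Z j ω| ≤ B)
    (hmean : ∀ j, ∫ ω, Z j ω ∂P = 0)
    {n : ℕ} {s : ℝ} (hs : 0 < s) (hsn : s ≤ 2 * n * B) :
    P {ω | s ≤ ∑ j ∈ Finset.range n, Z j ω}
      ≤ ENNReal.ofReal (Real.exp (-(s ^ 2 / (4 * n * B ^ 2)))) := by
  have hn : 0 < n := by
    rcases Nat.eq_zero_or_pos n with h | h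
    · exfalso; rw [h] at hsn; push_cast at hsn; nlinarith
    · exact h
  have hnR : (0:ℝ) < n := Nat.cast_pos.2 hn
  set l : ℝ := s / (2 * n * B ^ 2) with hl
  have hl0 : 0 < l := by positivity
  have hlB : l * B ≤ 1 := by
    rw [hl, div_mul_eq_mul_div, div_le_one (by positivity)]
    nlinarith
  -- integrability facts
  have hint_exp : ∀ j, Integrable (fun ω => Real.exp (l * Z j ω)) P := by
    intro j
    refine Integrable.mono' (integrable_const (Real.exp (l * B)))
      (((hmeas j).const_mul l).exp).aestronglyMeasurable ?_
    filter_upwards [hbd j] with ω hω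
    rw [Real.norm_eq_abs, abs_of_pos (Real.exp_pos _), Real.exp_le_exp]
    exact mul_le_mul_of_nonneg_left ((le_abs_self _).trans hω) hl0.le
  have hZint : ∀ j, Integrable (Z j) P := fun j =>
    Integrable.mono' (integrable_const B) (hmeas j).aestronglyMeasurable
      (by filter_upwards [hbd j] with ω hω; rwa [Real.norm_eq_abs])
  have hZsqint : ∀ j, Integrable (fun ω => (Z j ω) ^ 2) P := fun j =>
    Integrable.mono' (integrable_const (B ^ 2)) ((hmeas j).pow_const 2).aestronglyMeasurable
      (by filter_upwards [hbd j] with ω hω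
          rw [Real.norm_eq_abs, abs_pow]
          exact pow_le_pow_left₀ (abs_nonneg _) hω 2)
  -- mgf bound per coordinate
  have hmgf : ∀ j, mgf (Z j) P l ≤ Real.exp (l ^ 2 * B ^ 2) := by
    intro j
    have h1 : mgf (Z j) P l ≤ ∫ ω, (1 + l * Z j ω + (l * Z j ω) ^ 2) ∂P := by
      refine integral_mono_ae (hint_exp j) ?_ ?_
      · exact (integrable_const 1).add ((hZint j).const_mul l) |>.add
          (((hZsqint j).const_mul (l ^ 2)).congr (by
            filter_upwards with ω; ring))
      · filter_upwards [hbd j] with ω hω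
        refine exp_le_one_add_sq ?_
        rw [abs_mul, abs_of_pos hl0]
        calc l * |Z j ω| ≤ l * B := by nlinarith
        _ ≤ 1 := hlB
    have h2 : ∫ ω, (1 + l * Z j ω + (l * Z j ω) ^ 2) ∂P ≤ 1 + l ^ 2 * B ^ 2 := by
      have i1 : Integrable (fun ω => 1 + l * Z j ω) P :=
        (integrable_const 1).add ((hZint j).const_mul l)
      have i2 : Integrable (fun ω => l ^ 2 * Z j ω ^ 2) P := (hZsqint j).const_mul (l ^ 2)
      have i3 : Integrable (fun ω => l * Z j ω) P := (hZint j).const_mul l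
      have hi : ∫ ω, (1 + l * Z j ω + (l * Z j ω) ^ 2) ∂P
          = 1 + l * ∫ ω, Z j ω ∂P + l ^ 2 * ∫ ω, (Z j ω) ^ 2 ∂P := by
        have e1 : ∀ ω, 1 + l * Z j ω + (l * Z j ω) ^ 2
            = (1 + l * Z j ω) + l ^ 2 * Z j ω ^ 2 := by intro ω; ring
        simp only [e1]
        rw [integral_add i1 i2, integral_add (integrable_const 1) i3,
          integral_const, integral_const_mul, integral_const_mul]
        simp
      rw [hi, hmean j, mul_zero, add_zero]
      have : ∫ ω, (Z j ω) ^ 2 ∂P ≤ B ^ 2 := by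
        calc ∫ ω, (Z j ω) ^ 2 ∂P ≤ ∫ _, B ^ 2 ∂P := by
              refine integral_mono_ae (hZsqint j) (integrable_const _) ?_
              filter_upwards [hbd j] with ω hω
              rw [← sq_abs]; exact pow_le_pow_left₀ (abs_nonneg _) hω 2
        _ = B ^ 2 := by simp
      nlinarith
    calc mgf (Z j) P l ≤ 1 + l ^ 2 * B ^ 2 := h1.trans h2
    _ ≤ Real.exp (l ^ 2 * B ^ 2) := by
        have := Real.add_one_le_exp (l ^ 2 * B ^ 2); linarith
  -- Chernoff
  set W : Ω → ℝ := fun ω => ∑ j ∈ Finset.range n, Z j ω with hW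
  have hWsum : W = ∑ j ∈ Finset.range n, Z j := by
    funext ω; simp [hW, Finset.sum_apply]
  have hexp_sum_int : Integrable (fun ω => Real.exp (l * W ω)) P := by
    refine Integrable.mono' (integrable_const (Real.exp (l * (n * B))))
      (((Finset.measurable_sum _ (fun j _ => hmeas j)).const_mul l).exp).aestronglyMeasurable ?_
    have hball : ∀ᵐ ω ∂P, ∀ j, |Z j ω| ≤ B := ae_all_iff.2 hbd
    filter_upwards [hball] with ω hω
    rw [Real.norm_eq_abs, abs_of_pos (Real.exp_pos _), Real.exp_le_exp]
    refine mul_le_mul_of_nonneg_left ?_ hl0.le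
    calc W ω ≤ ∑ j ∈ Finset.range n, B :=
          Finset.sum_le_sum (fun j _ => (le_abs_self _).trans (hω j))
    _ = n * B := by simp [mul_comm]
  have hch := measure_ge_le_exp_mul_mgf (μ := P) (X := W) s hl0.le hexp_sum_int
  have hmgfW : mgf W P l = ∏ j ∈ Finset.range n, mgf (Z j) P l := by
    rw [hWsum]; exact hindep.mgf_sum hmeas _
  rw [hmgfW] at hch
  have hprod : ∏ j ∈ Finset.range n, mgf (Z j) P l ≤ Real.exp (n * (l ^ 2 * B ^ 2)) := by
    calc ∏ j ∈ Finset.range n, mgf (Z j) P l ≤ ∏ j ∈ Finset.range n, Real.exp (l ^ 2 * B ^ 2) :=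
          Finset.prod_le_prod (fun j _ => mgf_nonneg) (fun j _ => hmgf j)
    _ = Real.exp (n * (l ^ 2 * B ^ 2)) := by
        rw [Finset.prod_const, ← Real.exp_nat_mul]; simp
  have hfinal : Real.exp (-l * s) * ∏ j ∈ Finset.range n, mgf (Z j) P l
      ≤ Real.exp (-(s ^ 2 / (4 * n * B ^ 2))) := by
    calc Real.exp (-l * s) * ∏ j ∈ Finset.range n, mgf (Z j) P l
        ≤ Real.exp (-l * s) * Real.exp (n * (l ^ 2 * B ^ 2)) := by
          exact mul_le_mul_of_nonneg_left hprod (Real.exp_pos _).le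
    _ = Real.exp (-l * s + n * (l ^ 2 * B ^ 2)) := (Real.exp_add _ _).symm
    _ = Real.exp (-(s ^ 2 / (4 * n * B ^ 2))) := by
        congr 1
        rw [hl]
        field_simp
        ring
  rw [← ENNReal.ofReal_toReal (measure_ne_top P ({ω | s ≤ W ω}))]
  exact ENNReal.ofReal_le_ofReal (hch.trans hfinal)





lemma ae_mem_measSupp (μ : Measure ℂ) {Ω : Type} [mΩ : MeasurableSpace Ω] (P : Measure Ω)
    {X : Ω → ℂ} (hXm : Measurable X) (hXd : Measure.map X P = μ) :
    ∀ᵐ ω ∂P, X ω ∈ measSupp μ := by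
  have : P (X ⁻¹' (measSupp μ)ᶜ) = 0 := by
    rw [← Measure.map_apply hXm (isClosed_measSupp μ).measurableSet.compl, hXd]
    exact measSupp_compl_null μ
  filter_upwards [measure_eq_zero_iff_ae_notMem.1 this] with ω hω
  simpa using hω

lemma per_function (μ : Measure ℂ) [IsProbabilityMeasure μ]
    {Ω : Type} [mΩ : MeasurableSpace Ω] (P : Measure Ω) [IsProbabilityMeasure P]
    (X : ℕ → Ω → ℂ) (hXm : ∀ j, Measurable (X j)) (hXd : ∀ j, Measure.map (X j) P = μ)
    (hXi : iIndepFun X P)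
    (g : ℂ → ℝ) (hg : Measurable g) {B : ℝ} (hB : 0 < B)
    (hgB : ∀ x ∈ measSupp μ, |g x| ≤ B)
    {n : ℕ} {s : ℝ} (hs : 0 < s) (hsn : s ≤ 4 * n * B) :
    P {ω | s ≤ ∑ j ∈ Finset.range n, (g (X j ω) - ∫ x, g x ∂μ)}
      ≤ ENNReal.ofReal (Real.exp (-(s ^ 2 / (16 * n * B ^ 2)))) := by
  set m : ℝ := ∫ x, g x ∂μ with hm
  have hmB : |m| ≤ B := by
    have := norm_integral_le_of_norm_le_const (μ := μ) (f := g) (C := B) ?bound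
    · simpa [measure_univ] using this
    case bound =>
      filter_upwards [measure_eq_zero_iff_ae_notMem.1 (measSupp_compl_null μ)] with x hx
      exact (Real.norm_eq_abs _) ▸ hgB x (not_not.1 hx)
  set Z : ℕ → Ω → ℝ := fun j ω => g (X j ω) - m with hZ
  have hZmeas : ∀ j, Measurable (Z j) := fun j => (hg.comp (hXm j)).sub measurable_const
  have hZindep : iIndepFun Z P := by
    exact hXi.comp (fun _ => fun y => g y - m) (fun _ => hg.sub measurable_const)
  have hZbd : ∀ j, ∀ᵐ ω ∂P, |Z j ω| ≤ 2 * B := by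
    intro j
    filter_upwards [ae_mem_measSupp μ P (hXm j) (hXd j)] with ω hω
    have := hgB _ hω
    rw [hZ]
    calc |g (X j ω) - m| ≤ |g (X j ω)| + |m| := abs_sub _ _
    _ ≤ 2 * B := by linarith
  have hgint : ∀ j, Integrable (fun ω => g (X j ω)) P := by
    intro j
    refine Integrable.mono' (integrable_const B) (hg.comp (hXm j)).aestronglyMeasurable ?_
    filter_upwards [ae_mem_measSupp μ P (hXm j) (hXd j)] with ω hω
    rw [Real.norm_eq_abs]; exact hgB _ hω
  have hZmean : ∀ j, ∫ ω, Z j ω ∂P = 0 := by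
    intro j
    rw [hZ]
    simp only
    rw [integral_sub (hgint j) (integrable_const m), integral_const]
    simp only [probReal_univ, smul_eq_mul, one_mul, sub_eq_zero]
    rw [← integral_map (hXm j).aemeasurable hg.aestronglyMeasurable, hXd j]
  have h := chernoff_bd P Z hZmeas hZindep (by positivity : (0:ℝ) < 2 * B) hZbd hZmean hs
    (by push_cast; linarith : s ≤ 2 * n * (2 * B))
  calc P {ω | s ≤ ∑ j ∈ Finset.range n, (g (X j ω) - m)} = P {ω | s ≤ ∑ j ∈ Finset.range n, Z j ω} := rfl
  _ ≤ ENNReal.ofReal (Real.exp (-(s ^ 2 / (4 * n * (2 * B) ^ 2)))) := h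
  _ = ENNReal.ofReal (Real.exp (-(s ^ 2 / (16 * n * B ^ 2)))) := by ring_nf





lemma norm_inv_le_of_infDist {w x : ℂ} {r : ℝ} (hr : 0 < r)
    (hw : r ≤ Metric.infDist w (measSupp μ)) (hx : x ∈ measSupp μ) (μ : Measure ℂ) :
    ‖(w - x)⁻¹‖ ≤ 1 / r := by
  have h1 : r ≤ ‖w - x‖ := hw.trans ((Metric.infDist_le_dist_of_mem hx).trans_eq (dist_eq_norm w x))
  rw [norm_inv, one_div]
  exact inv_anti₀ hr h1

set_option maxHeartbeats 1000000 in
lemma per_point (μ : Measure ℂ) [IsProbabilityMeasure μ]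
    {Ω : Type} [mΩ : MeasurableSpace Ω] (P : Measure Ω) [IsProbabilityMeasure P]
    (X : ℕ → Ω → ℂ) (hXm : ∀ j, Measurable (X j)) (hXd : ∀ j, Measure.map (X j) P = μ)
    (hXi : iIndepFun X P)
    (w : ℂ) {r t : ℝ} (hr : 0 < r) (hw : r ≤ Metric.infDist w (measSupp μ))
    (ht : 0 < t) (htr : t ≤ 16 / r) {n : ℕ} (hn : 0 < n) :
    P {ω | t / 2 ≤ ‖(1 / n : ℂ) * ∑ j ∈ Finset.range n, (w - X j ω)⁻¹ - stieltjes μ w‖}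
      ≤ ENNReal.ofReal (4 * Real.exp (-(n * t ^ 2 * r ^ 2 / 256))) := by
  have hnR : (0:ℝ) < n := Nat.cast_pos.2 hn
  set B : ℝ := 1 / r with hB
  have hB0 : 0 < B := by positivity
  set s : ℝ := n * t / 4 with hs'
  have hs : 0 < s := by positivity
  have hsn : s ≤ 4 * n * B := by
    have h2 : t * r ≤ 16 := (le_div_iff₀ hr).1 htr
    rw [hs', hB, div_le_iff₀ (by norm_num : (0:ℝ) < 4),
      show 4 * (n:ℝ) * (1/r) * 4 = 16 * n / r by ring, le_div_iff₀ hr]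
    nlinarith
  -- the four coordinate functions
  have hfm : Measurable (fun x : ℂ => (w - x)⁻¹) := (measurable_const.sub measurable_id).inv
  set g1 : ℂ → ℝ := fun x => ((w - x)⁻¹).re with hg1
  set g2 : ℂ → ℝ := fun x => -((w - x)⁻¹).re with hg2
  set g3 : ℂ → ℝ := fun x => ((w - x)⁻¹).im with hg3
  set g4 : ℂ → ℝ := fun x => -((w - x)⁻¹).im with hg4
  have hg1m : Measurable g1 := Complex.measurable_re.comp hfm
  have hg2m : Measurable g2 := hg1m.neg
  have hg3m : Measurable g3 := Complex.measurable_im.comp hfm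
  have hg4m : Measurable g4 := hg3m.neg
  have hnormB : ∀ x ∈ measSupp μ, ‖(w - x)⁻¹‖ ≤ B := fun x hx =>
    norm_inv_le_of_infDist hr hw hx μ
  have hb1 : ∀ x ∈ measSupp μ, |g1 x| ≤ B := fun x hx =>
    (Complex.abs_re_le_norm _).trans (hnormB x hx)
  have hb2 : ∀ x ∈ measSupp μ, |g2 x| ≤ B := fun x hx => (abs_neg _).trans_le (hb1 x hx)
  have hb3 : ∀ x ∈ measSupp μ, |g3 x| ≤ B := fun x hx =>
    (Complex.abs_im_le_norm _).trans (hnormB x hx)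
  have hb4 : ∀ x ∈ measSupp μ, |g4 x| ≤ B := fun x hx => (abs_neg _).trans_le (hb3 x hx)
  -- integrability of the resolvent wrt μ and identification of real/imag parts
  have hfint : Integrable (fun x => (w - x)⁻¹) μ := by
    refine Integrable.mono' (integrable_const B) hfm.aestronglyMeasurable ?_
    filter_upwards [measure_eq_zero_iff_ae_notMem.1 (measSupp_compl_null μ)] with x hx
    exact hnormB x (not_not.1 hx)
  have hre : ∫ x, g1 x ∂μ = (stieltjes μ w).re := integral_re hfint
  have him : ∫ x, g3 x ∂μ = (stieltjes μ w).im := integral_im hfint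
  have hre2 : ∫ x, g2 x ∂μ = -(stieltjes μ w).re := by
    rw [hg2]; rw [integral_neg]; rw [hre]
  have him2 : ∫ x, g4 x ∂μ = -(stieltjes μ w).im := by
    rw [hg4]; rw [integral_neg]; rw [him]
  -- set inclusion into four events
  set A1 := {ω | s ≤ ∑ j ∈ Finset.range n, (g1 (X j ω) - ∫ x, g1 x ∂μ)} with hA1
  set A2 := {ω | s ≤ ∑ j ∈ Finset.range n, (g2 (X j ω) - ∫ x, g2 x ∂μ)} with hA2
  set A3 := {ω | s ≤ ∑ j ∈ Finset.range n, (g3 (X j ω) - ∫ x, g3 x ∂μ)} with hA3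
  set A4 := {ω | s ≤ ∑ j ∈ Finset.range n, (g4 (X j ω) - ∫ x, g4 x ∂μ)} with hA4
  have hsubset : {ω | t / 2 ≤ ‖(1 / n : ℂ) * ∑ j ∈ Finset.range n, (w - X j ω)⁻¹ - stieltjes μ w‖}
      ⊆ A1 ∪ A2 ∪ A3 ∪ A4 := by
    intro ω hω
    simp only [Set.mem_setOf_eq] at hω
    set D : ℂ := (1 / n : ℂ) * ∑ j ∈ Finset.range n, (w - X j ω)⁻¹ - stieltjes μ w with hD
    have hcast : (1 / n : ℂ) = (((1 / n : ℝ)) : ℂ) := by push_cast; ring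
    have hDre : D.re = (1 / n : ℝ) * ∑ j ∈ Finset.range n, g1 (X j ω) - (stieltjes μ w).re := by
      rw [hD, Complex.sub_re, hcast, Complex.re_ofReal_mul, Complex.re_sum]
    have hDim : D.im = (1 / n : ℝ) * ∑ j ∈ Finset.range n, g3 (X j ω) - (stieltjes μ w).im := by
      rw [hD, Complex.sub_im, hcast, Complex.im_ofReal_mul, Complex.im_sum]
    have hsum1 : ∑ j ∈ Finset.range n, (g1 (X j ω) - ∫ x, g1 x ∂μ) = n * D.re := by
      rw [Finset.sum_sub_distrib, Finset.sum_const, Finset.card_range, hre, hDre]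
      field_simp
      rw [nsmul_eq_mul]
    have hsum3 : ∑ j ∈ Finset.range n, (g3 (X j ω) - ∫ x, g3 x ∂μ) = n * D.im := by
      rw [Finset.sum_sub_distrib, Finset.sum_const, Finset.card_range, him, hDim]
      field_simp
      rw [nsmul_eq_mul]
    have hsum2 : ∑ j ∈ Finset.range n, (g2 (X j ω) - ∫ x, g2 x ∂μ) = -(n * D.re) := by
      have e : ∀ j, g2 (X j ω) - ∫ x, g2 x ∂μ = -(g1 (X j ω) - ∫ x, g1 x ∂μ) := by
        intro j
        rw [hre2, hre]
        simp only [hg2, hg1]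
        ring
      rw [Finset.sum_congr rfl (fun j _ => e j), Finset.sum_neg_distrib, hsum1]
    have hsum4 : ∑ j ∈ Finset.range n, (g4 (X j ω) - ∫ x, g4 x ∂μ) = -(n * D.im) := by
      have e : ∀ j, g4 (X j ω) - ∫ x, g4 x ∂μ = -(g3 (X j ω) - ∫ x, g3 x ∂μ) := by
        intro j
        rw [him2, him]
        simp only [hg4, hg3]
        ring
      rw [Finset.sum_congr rfl (fun j _ => e j), Finset.sum_neg_distrib, hsum3]
    have habs : t / 2 ≤ |D.re| + |D.im| := by
      refine hω.trans ?_
      exact Complex.norm_le_abs_re_add_abs_im D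
    have hcases : t / 4 ≤ |D.re| ∨ t / 4 ≤ |D.im| := by
      by_contra h
      push_neg at h
      linarith [h.1, h.2]
    have hmulle : ∀ a : ℝ, t / 4 ≤ a → s ≤ n * a := by
      intro a ha
      rw [hs']
      calc (n:ℝ) * t / 4 = n * (t/4) := by ring
      _ ≤ n * a := by nlinarith
    rcases hcases with h | h
    · rcases le_abs.1 h with h' | h'
      · exact Or.inl (Or.inl (Or.inl (by
          show s ≤ _
          rw [hsum1]; exact hmulle _ h')))
      · exact Or.inl (Or.inl (Or.inr (by
          show s ≤ _
          rw [hsum2, ← mul_neg]; exact hmulle _ h')))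
    · rcases le_abs.1 h with h' | h'
      · exact Or.inl (Or.inr (by
          show s ≤ _
          rw [hsum3]; exact hmulle _ h'))
      · exact Or.inr (by
          show s ≤ _
          rw [hsum4, ← mul_neg]; exact hmulle _ h')
  -- apply per_function four times
  set e : ℝ := Real.exp (-(s ^ 2 / (16 * n * B ^ 2))) with he
  have h1 := per_function μ P X hXm hXd hXi g1 hg1m hB0 hb1 hs hsn
  have h2 := per_function μ P X hXm hXd hXi g2 hg2m hB0 hb2 hs hsn
  have h3 := per_function μ P X hXm hXd hXi g3 hg3m hB0 hb3 hs hsn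
  have h4 := per_function μ P X hXm hXd hXi g4 hg4m hB0 hb4 hs hsn
  have hexp_eq : s ^ 2 / (16 * n * B ^ 2) = n * t ^ 2 * r ^ 2 / 256 := by
    rw [hs', hB]
    field_simp
    ring
  calc P {ω | t / 2 ≤ ‖(1 / n : ℂ) * ∑ j ∈ Finset.range n, (w - X j ω)⁻¹ - stieltjes μ w‖}
      ≤ P (A1 ∪ A2 ∪ A3 ∪ A4) := measure_mono hsubset
  _ ≤ P (A1 ∪ A2 ∪ A3) + P A4 := measure_union_le _ _
  _ ≤ (P (A1 ∪ A2) + P A3) + P A4 := by gcongr; exact measure_union_le _ _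
  _ ≤ ((P A1 + P A2) + P A3) + P A4 := by gcongr; exact measure_union_le _ _
  _ ≤ ((ENNReal.ofReal e + ENNReal.ofReal e) + ENNReal.ofReal e) + ENNReal.ofReal e := by
      gcongr
  _ = ENNReal.ofReal (((e + e) + e) + e) := by
      rw [← ENNReal.ofReal_add (by positivity) (by positivity),
        ← ENNReal.ofReal_add (by positivity) (by positivity),
        ← ENNReal.ofReal_add (by positivity) (by positivity)]
  _ = ENNReal.ofReal (4 * Real.exp (-(n * t ^ 2 * r ^ 2 / 256))) := by
      rw [he, hexp_eq]; ring_nf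


lemma grid_cover {M δ : ℝ} (hM : 0 < M) (hδ : 0 < δ) :
    ∃ F : Finset ℂ, (F.card : ℝ) ≤ (2 * (⌈M / δ⌉₊ + 1) + 1) ^ 2 ∧
      ∀ z : ℂ, ‖z‖ ≤ M → ∃ w ∈ F, ‖z - w‖ ≤ δ := by
  set k : ℕ := ⌈M / δ⌉₊ + 1 with hk
  refine ⟨((Finset.Icc (-(k:ℤ)) k) ×ˢ (Finset.Icc (-(k:ℤ)) k)).image
    (fun p => ((p.1 : ℝ) * δ + ((p.2 : ℝ) * δ) * Complex.I : ℂ)), ?_, ?_⟩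
  · calc ((((Finset.Icc (-(k:ℤ)) k) ×ˢ (Finset.Icc (-(k:ℤ)) k)).image
        (fun p => ((p.1 : ℝ) * δ + ((p.2 : ℝ) * δ) * Complex.I : ℂ))).card : ℝ)
        ≤ (((Finset.Icc (-(k:ℤ)) k) ×ˢ (Finset.Icc (-(k:ℤ)) k)).card : ℝ) := by
          exact_mod_cast Finset.card_image_le
    _ = ((Finset.Icc (-(k:ℤ)) k).card : ℝ) ^ 2 := by
        rw [Finset.card_product]; push_cast; ring
    _ ≤ (2 * (⌈M / δ⌉₊ + 1) + 1) ^ 2 := by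
        have : (Finset.Icc (-(k:ℤ)) k).card = 2 * k + 1 := by
          rw [Int.card_Icc]
          omega
        rw [this, hk]
        push_cast
        norm_num
  · intro z hz
    set a : ℤ := round (z.re / δ) with ha
    set b : ℤ := round (z.im / δ) with hb
    have hre : |z.re| ≤ M := (Complex.abs_re_le_norm z).trans hz
    have him : |z.im| ≤ M := (Complex.abs_im_le_norm z).trans hz
    have hbound : ∀ x : ℝ, |x| ≤ M → |round (x / δ)| ≤ (k : ℤ) := by
      intro x hx
      have h1 : |(round (x / δ) : ℝ)| ≤ M / δ + 1 := by
        have := abs_sub_round (x / δ)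
        have h2 : |x / δ| ≤ M / δ := by
          rw [abs_div, abs_of_pos hδ]
          exact div_le_div_of_nonneg_right hx hδ.le |>.trans_eq rfl
        calc |(round (x / δ) : ℝ)| ≤ |(round (x/δ) : ℝ) - x/δ| + |x/δ| := by
              have := abs_sub_abs_le_abs_sub ((round (x/δ) : ℝ)) (x/δ)
              have h3 := abs_add_le ((round (x/δ) : ℝ) - x/δ) (x/δ)
              calc |(round (x / δ) : ℝ)| = |((round (x/δ) : ℝ) - x/δ) + x/δ| := by ring_nf
              _ ≤ _ := h3
        _ ≤ 1/2 + M/δ := by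
            rw [abs_sub_comm]
            linarith [abs_sub_round (x / δ), h2]
        _ ≤ M / δ + 1 := by linarith
      have hkR : M / δ + 1 ≤ (k : ℝ) := by
        rw [hk]; push_cast
        linarith [Nat.le_ceil (M / δ)]
      have : |(round (x / δ) : ℝ)| ≤ (k : ℝ) := h1.trans hkR
      exact_mod_cast (by exact_mod_cast this : |((round (x/δ) : ℤ) : ℝ)| ≤ ((k:ℤ) : ℝ))
    refine ⟨((a : ℝ) * δ + ((b : ℝ) * δ) * Complex.I : ℂ), ?_, ?_⟩
    · refine Finset.mem_image.2 ⟨(a, b), ?_, rfl⟩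
      rw [Finset.mem_product, Finset.mem_Icc, Finset.mem_Icc]
      have h1 := hbound z.re hre
      have h2 := hbound z.im him
      rw [← ha] at h1
      rw [← hb] at h2
      rw [abs_le] at h1 h2
      exact ⟨⟨h1.1, h1.2⟩, ⟨h2.1, h2.2⟩⟩
    · have hwre : ((a : ℝ) * δ + ((b : ℝ) * δ) * Complex.I : ℂ).re = (a:ℝ) * δ := by simp
      have hwim : ((a : ℝ) * δ + ((b : ℝ) * δ) * Complex.I : ℂ).im = (b:ℝ) * δ := by simp
      have hdre : |z.re - (a:ℝ) * δ| ≤ δ / 2 := by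
        have := abs_sub_round (z.re / δ)
        rw [← ha] at this
        have h4 : z.re - (a:ℝ) * δ = (z.re / δ - (a:ℝ)) * δ := by field_simp
        rw [h4, abs_mul, abs_of_pos hδ]
        calc |z.re / δ - (a:ℝ)| * δ ≤ (1/2) * δ := by
              exact mul_le_mul_of_nonneg_right this hδ.le
        _ = δ / 2 := by ring
      have hdim : |z.im - (b:ℝ) * δ| ≤ δ / 2 := by
        have := abs_sub_round (z.im / δ)
        rw [← hb] at this
        have h4 : z.im - (b:ℝ) * δ = (z.im / δ - (b:ℝ)) * δ := by field_simp
        rw [h4, abs_mul, abs_of_pos hδ]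
        calc |z.im / δ - (b:ℝ)| * δ ≤ (1/2) * δ := by
              exact mul_le_mul_of_nonneg_right this hδ.le
        _ = δ / 2 := by ring
      calc ‖z - ((a : ℝ) * δ + ((b : ℝ) * δ) * Complex.I : ℂ)‖
          ≤ |(z - _).re| + |(z - _).im| := by
            exact Complex.norm_le_abs_re_add_abs_im _
      _ ≤ δ / 2 + δ / 2 := by
            rw [Complex.sub_re, Complex.sub_im, hwre, hwim]
            exact add_le_add hdre hdim
      _ = δ := by ring


end Aux

set_option maxHeartbeats 2000000 in
/-- **Lemma (uniform concentration of the empirical Stieltjes transform).**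
There are absolute constants C, c > 0 such that: if μ is a compactly supported
probability measure on ℂ and X₁, …, Xₙ are iid with distribution μ, then for every
M, ε, t > 0,
P( sup_{|z| ≤ M, dist(z, supp μ) ≥ ε} |(1/n) Σ_j 1/(z − X_j) − m_μ(z)| ≥ t )
  ≤ C (1 + 40M/(ε²t)) exp(−c n t² ε²). -/
theorem stieltjes_uniform_concentration :
    ∃ C > (0 : ℝ), ∃ c > (0 : ℝ),
      ∀ (μ : Measure ℂ), IsProbabilityMeasure μ → IsCompact (measSupp μ) →
      ∀ (Ω : Type) (mΩ : MeasurableSpace Ω) (P : Measure Ω), IsProbabilityMeasure P →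
      ∀ (X : ℕ → Ω → ℂ),
        (∀ j, Measurable (X j)) →
        (∀ j, Measure.map (X j) P = μ) →
        iIndepFun X P →
        ∀ (n : ℕ) (M ε t : ℝ), 0 < M → 0 < ε → 0 < t →
          P {ω | ∃ z : ℂ, ‖z‖ ≤ M ∧ ε ≤ Metric.infDist z (measSupp μ) ∧
              t ≤ ‖(1 / n : ℂ) * ∑ j ∈ Finset.range n, (z - X j ω)⁻¹ - stieltjes μ z‖}
            ≤ ENNReal.ofReal (C * (1 + 40 * M / (ε ^ 2 * t)) *
                Real.exp (-(c * n * t ^ 2 * ε ^ 2))) := by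
  classical
  refine ⟨100, by norm_num, 3/4096, by norm_num, ?_⟩
  intro μ hμ hcpt Ω mΩ P hP X hXm hXd hXi n M ε t hM hε ht
  set u : ℝ := 40 * M / (ε ^ 2 * t) with hu
  have hu0 : (0:ℝ) ≤ u := by positivity
  set e1 : ℝ := Real.exp (-(3 / 4096 * (n:ℝ) * t ^ 2 * ε ^ 2)) with he1
  have he1pos : 0 < e1 := Real.exp_pos _
  have he1le : e1 ≤ 1 := Real.exp_le_one_iff.2 (neg_nonpos.2 (by positivity))
  set E : Set Ω := {ω | ∃ z : ℂ, ‖z‖ ≤ M ∧ ε ≤ Metric.infDist z (measSupp μ) ∧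
      t ≤ ‖(1 / n : ℂ) * ∑ j ∈ Finset.range n, (z - X j ω)⁻¹ - stieltjes μ z‖} with hE
  set Bad : Set Ω := {ω | ∃ j, X j ω ∉ measSupp μ} with hBad
  have hBadnull : P Bad = 0 := by
    have : Bad = ⋃ j, {ω | X j ω ∉ measSupp μ} := by
      ext ω; simp [hBad]
    rw [this]
    refine measure_iUnion_null fun j => ?_
    have : {ω | X j ω ∉ measSupp μ} = X j ⁻¹' (measSupp μ)ᶜ := rfl
    rw [this, ← Measure.map_apply (hXm j) (isClosed_measSupp μ).measurableSet.compl, hXd j]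
    exact measSupp_compl_null μ
  by_cases h1 : (1:ℝ) ≤ 100 * (1 + u) * e1
  · exact le_trans prob_le_one (ENNReal.one_le_ofReal.2 h1)
  · push_neg at h1
    by_cases h2 : 2 / ε < t
    · -- deviation can never exceed 2/ε < t on the a.s. event
      have hsub : E ⊆ Bad := by
        intro ω hω
        by_contra hb
        have hgood : ∀ j, X j ω ∈ measSupp μ := by
          simp only [hBad, Set.mem_setOf_eq, not_exists, not_not] at hb
          exact hb
        obtain ⟨z, hzM, hzd, hzt⟩ := hω
        have hmz : ‖stieltjes μ z‖ ≤ 1 / ε := by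
          have := norm_integral_le_of_norm_le_const (μ := μ)
            (f := fun x => (z - x)⁻¹) (C := 1/ε) ?bd
          · simpa [stieltjes, measure_univ] using this
          case bd =>
            filter_upwards [measure_eq_zero_iff_ae_notMem.1 (measSupp_compl_null μ)] with x hx
            have := norm_inv_le_of_infDist hε hzd (not_not.1 hx) μ
            simpa using this
        have hemp : ‖(1 / n : ℂ) * ∑ j ∈ Finset.range n, (z - X j ω)⁻¹‖ ≤ 1 / ε := by
          rcases Nat.eq_zero_or_pos n with hn0 | hn0
          · subst hn0; simp; positivity
          have hnR : (0:ℝ) < n := Nat.cast_pos.2 hn0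
          rw [norm_mul]
          have h1n : ‖(1 / n : ℂ)‖ = 1 / (n:ℝ) := by
            rw [norm_div, norm_one, Complex.norm_natCast]
          rw [h1n]
          have hsumb : ‖∑ j ∈ Finset.range n, (z - X j ω)⁻¹‖ ≤ (n:ℝ) * (1/ε) := by
            calc ‖∑ j ∈ Finset.range n, (z - X j ω)⁻¹‖
                ≤ ∑ j ∈ Finset.range n, ‖(z - X j ω)⁻¹‖ := norm_sum_le _ _
            _ ≤ ∑ j ∈ Finset.range n, (1/ε) := Finset.sum_le_sum (fun j _ => by
                have := norm_inv_le_of_infDist hε hzd (hgood j) μ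
                simpa using this)
            _ = (n:ℝ) * (1/ε) := by simp [mul_comm]
          calc 1 / (n:ℝ) * ‖∑ j ∈ Finset.range n, (z - X j ω)⁻¹‖
              ≤ 1 / (n:ℝ) * ((n:ℝ) * (1/ε)) := by
                exact mul_le_mul_of_nonneg_left hsumb (by positivity)
          _ = 1 / ε := by field_simp
        have : t ≤ 2 / ε := by
          have h3 := norm_sub_le ((1 / n : ℂ) * ∑ j ∈ Finset.range n, (z - X j ω)⁻¹)
            (stieltjes μ z)
          have h4 : (1:ℝ)/ε + 1/ε = 2/ε := by ring
          linarith
        linarith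
      exact (measure_mono_null hsub hBadnull).le.trans (by simp)
    · push_neg at h2  -- t ≤ 2/ε
      have htε2 : t * ε ≤ 2 := by
        rw [le_div_iff₀ hε] at h2; linarith
      have hn : 0 < n := by
        by_contra hn0
        push_neg at hn0
        have : n = 0 := Nat.le_zero.1 hn0
        apply absurd h1
        push_neg
        rw [he1, this]
        push_cast
        rw [show -(3 / 4096 * (0:ℝ) * t ^ 2 * ε ^ 2) = 0 by ring, Real.exp_zero]
        nlinarith
      have hnR : (0:ℝ) < n := Nat.cast_pos.2 hn
      set δ : ℝ := t * ε ^ 2 / 8 with hδ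
      have hδ0 : 0 < δ := by positivity
      have hδε : δ ≤ ε / 4 := by
        rw [hδ]
        nlinarith
      obtain ⟨F, hFcard, hFcover⟩ := grid_cover hM hδ0
      set G : Finset ℂ := F.filter (fun w => 3*ε/4 ≤ Metric.infDist w (measSupp μ)) with hG
      set Ew : ℂ → Set Ω := fun w => {ω | t / 2 ≤
        ‖(1 / n : ℂ) * ∑ j ∈ Finset.range n, (w - X j ω)⁻¹ - stieltjes μ w‖} with hEw
      -- integrability of resolvents at points far from the support
      have hintgen : ∀ (v : ℂ) (r : ℝ), 0 < r → r ≤ Metric.infDist v (measSupp μ) →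
          Integrable (fun x => (v - x)⁻¹) μ := by
        intro v r hr hv
        refine Integrable.mono' (integrable_const (1/r))
          ((measurable_const.sub measurable_id).inv).aestronglyMeasurable ?_
        filter_upwards [measure_eq_zero_iff_ae_notMem.1 (measSupp_compl_null μ)] with x hx
        exact norm_inv_le_of_infDist hr hv (not_not.1 hx) μ
      -- main inclusion
      have hsub : E ⊆ Bad ∪ ⋃ w ∈ G, Ew w := by
        intro ω hω
        by_cases hb : ω ∈ Bad
        · exact Or.inl hb
        refine Or.inr ?_
        have hgood : ∀ j, X j ω ∈ measSupp μ := by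
          simp only [hBad, Set.mem_setOf_eq, not_exists, not_not] at hb
          exact hb
        obtain ⟨z, hzM, hzd, hzt⟩ := hω
        obtain ⟨w, hwF, hwz⟩ := hFcover z hzM
        have hwd : 3*ε/4 ≤ Metric.infDist w (measSupp μ) := by
          have h5 := Metric.infDist_le_infDist_add_dist (x := z) (y := w) (s := measSupp μ)
          rw [dist_eq_norm] at h5
          linarith
        have hwG : w ∈ G := Finset.mem_filter.2 ⟨hwF, hwd⟩
        have hkey : ∀ x ∈ measSupp μ, ‖(z - x)⁻¹ - (w - x)⁻¹‖ ≤ t / 6 := by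
          intro x hx
          have hzx : ε ≤ ‖z - x‖ := by
            have := Metric.infDist_le_dist_of_mem (x := z) hx
            rw [dist_eq_norm] at this
            linarith
          have hwx : 3*ε/4 ≤ ‖w - x‖ := by
            have := Metric.infDist_le_dist_of_mem (x := w) hx
            rw [dist_eq_norm] at this
            linarith
          have hz0 : z - x ≠ 0 := by
            intro h; rw [h, norm_zero] at hzx; linarith
          have hw0 : w - x ≠ 0 := by
            intro h; rw [h, norm_zero] at hwx; linarith
          have hiden : (z - x)⁻¹ - (w - x)⁻¹ = (w - z) * ((z - x)⁻¹ * (w - x)⁻¹) := by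
            field_simp
            ring
          rw [hiden, norm_mul, norm_mul, norm_inv, norm_inv]
          have h6 : ‖w - z‖ ≤ δ := by rw [norm_sub_rev]; exact hwz
          have h7 : ‖z - x‖⁻¹ ≤ ε⁻¹ := inv_anti₀ hε hzx
          have h8 : ‖w - x‖⁻¹ ≤ (3*ε/4)⁻¹ := inv_anti₀ (by positivity) hwx
          calc ‖w - z‖ * (‖z - x‖⁻¹ * ‖w - x‖⁻¹) ≤ δ * (ε⁻¹ * (3*ε/4)⁻¹) := by
                refine mul_le_mul h6 (mul_le_mul h7 h8 (by positivity) (by positivity))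
                  (by positivity) hδ0.le
          _ = t / 6 := by
                rw [hδ]
                field_simp
                ring
        show ω ∈ ⋃ w ∈ G, Ew w
        refine Set.mem_biUnion hwG ?_
        show t / 2 ≤ ‖(1 / n : ℂ) * ∑ j ∈ Finset.range n, (w - X j ω)⁻¹ - stieltjes μ w‖
        set Dz : ℂ := (1 / n : ℂ) * ∑ j ∈ Finset.range n, (z - X j ω)⁻¹ - stieltjes μ z with hDz
        set Dw : ℂ := (1 / n : ℂ) * ∑ j ∈ Finset.range n, (w - X j ω)⁻¹ - stieltjes μ w with hDw
        have hempd : ‖(1 / n : ℂ) * ∑ j ∈ Finset.range n, (z - X j ω)⁻¹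
            - (1 / n : ℂ) * ∑ j ∈ Finset.range n, (w - X j ω)⁻¹‖ ≤ t / 6 := by
          rw [← mul_sub, ← Finset.sum_sub_distrib, norm_mul]
          have h1n : ‖(1 / n : ℂ)‖ = 1 / (n:ℝ) := by
            rw [norm_div, norm_one, Complex.norm_natCast]
          rw [h1n]
          have hsumb : ‖∑ j ∈ Finset.range n, ((z - X j ω)⁻¹ - (w - X j ω)⁻¹)‖
              ≤ (n:ℝ) * (t/6) := by
            calc ‖∑ j ∈ Finset.range n, ((z - X j ω)⁻¹ - (w - X j ω)⁻¹)‖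
                ≤ ∑ j ∈ Finset.range n, ‖(z - X j ω)⁻¹ - (w - X j ω)⁻¹‖ := norm_sum_le _ _
            _ ≤ ∑ j ∈ Finset.range n, (t/6) :=
                Finset.sum_le_sum (fun j _ => hkey _ (hgood j))
            _ = (n:ℝ) * (t/6) := by simp [mul_comm]
          calc (1:ℝ) / n * ‖∑ j ∈ Finset.range n, ((z - X j ω)⁻¹ - (w - X j ω)⁻¹)‖
              ≤ 1 / (n:ℝ) * ((n:ℝ) * (t/6)) := by
                exact mul_le_mul_of_nonneg_left hsumb (by positivity)
          _ = t / 6 := by field_simp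
        have hstd : ‖stieltjes μ z - stieltjes μ w‖ ≤ t / 6 := by
          have hiz : Integrable (fun x => (z - x)⁻¹) μ := hintgen z ε hε hzd
          have hiw : Integrable (fun x => (w - x)⁻¹) μ := hintgen w (3*ε/4) (by positivity) hwd
          have hdiff : stieltjes μ z - stieltjes μ w
              = ∫ x, ((z - x)⁻¹ - (w - x)⁻¹) ∂μ := by
            rw [stieltjes, stieltjes, ← integral_sub hiz hiw]
          rw [hdiff]
          have := norm_integral_le_of_norm_le_const (μ := μ)
            (f := fun x => (z - x)⁻¹ - (w - x)⁻¹) (C := t/6) ?bd2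
          · simpa [measure_univ] using this
          case bd2 =>
            filter_upwards [measure_eq_zero_iff_ae_notMem.1 (measSupp_compl_null μ)] with x hx
            exact hkey x (not_not.1 hx)
        have htri : ‖Dz‖ ≤ ‖Dw‖ + ‖Dz - Dw‖ := by
          calc ‖Dz‖ = ‖Dw + (Dz - Dw)‖ := by rw [show Dw + (Dz - Dw) = Dz by ring]
          _ ≤ ‖Dw‖ + ‖Dz - Dw‖ := norm_add_le _ _
        have hDzDw : ‖Dz - Dw‖ ≤ t / 3 := by
          have hre : Dz - Dw = ((1 / n : ℂ) * ∑ j ∈ Finset.range n, (z - X j ω)⁻¹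
              - (1 / n : ℂ) * ∑ j ∈ Finset.range n, (w - X j ω)⁻¹)
              - (stieltjes μ z - stieltjes μ w) := by
            rw [hDz, hDw]; ring
          rw [hre]
          refine (norm_sub_le _ _).trans ?_
          linarith
        have : t ≤ ‖Dz‖ := hzt
        linarith
      -- union bound
      have hperpt : ∀ w ∈ G, P (Ew w)
          ≤ ENNReal.ofReal (4 * Real.exp (-((n:ℝ) * t ^ 2 * (3*ε/4) ^ 2 / 256))) := by
        intro w hwG
        have hwd := (Finset.mem_filter.1 hwG).2
        exact per_point μ P X hXm hXd hXi w (r := 3*ε/4) (by positivity) hwd ht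
          (by rw [le_div_iff₀ (by positivity : (0:ℝ) < 3*ε/4)]; nlinarith) hn
      have hcardF : (G.card : ℝ) ≤ (5 * (1 + u)) ^ 2 := by
        have hGF : (G.card : ℝ) ≤ (F.card : ℝ) := by
          exact_mod_cast Finset.card_filter_le _ _
        have hceil : ((⌈M / δ⌉₊ : ℝ)) < M / δ + 1 := Nat.ceil_lt_add_one (by positivity)
        have hδu : 2 * (M / δ) ≤ u := by
          rw [hδ, hu]
          have e2 : 2 * (M / (t * ε ^ 2 / 8)) = 16 * M / (t * ε ^ 2) := by
            field_simp
            ring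
          rw [e2, div_le_div_iff₀ (by positivity) (by positivity)]
          nlinarith [mul_nonneg (mul_nonneg hM.le ht.le) (sq_nonneg ε)]
        have hbase : (2 * ((⌈M / δ⌉₊ : ℝ) + 1) + 1) ≤ 5 * (1 + u) := by
          nlinarith
        calc (G.card : ℝ) ≤ (2 * ((⌈M / δ⌉₊ : ℝ) + 1) + 1) ^ 2 := hGF.trans hFcard
        _ ≤ (5 * (1 + u)) ^ 2 :=
              pow_le_pow_left₀ (by positivity) hbase 2
      have hexpeq : Real.exp (-((n:ℝ) * t ^ 2 * (3*ε/4) ^ 2 / 256)) = e1 ^ 3 := by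
        rw [he1, ← Real.exp_nat_mul]
        congr 1
        push_cast
        ring
      calc P E ≤ P (Bad ∪ ⋃ w ∈ G, Ew w) := measure_mono hsub
      _ ≤ P Bad + P (⋃ w ∈ G, Ew w) := measure_union_le _ _
      _ = P (⋃ w ∈ G, Ew w) := by rw [hBadnull, zero_add]
      _ ≤ ∑ w ∈ G, P (Ew w) := measure_biUnion_finset_le _ _
      _ ≤ ∑ _w ∈ G, ENNReal.ofReal (4 * Real.exp (-((n:ℝ) * t ^ 2 * (3*ε/4) ^ 2 / 256))) :=
            Finset.sum_le_sum hperpt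
      _ = (G.card : ENNReal) * ENNReal.ofReal (4 * Real.exp (-((n:ℝ) * t ^ 2 * (3*ε/4) ^ 2 / 256)))
          := by rw [Finset.sum_const, nsmul_eq_mul]
      _ ≤ ENNReal.ofReal ((5 * (1 + u)) ^ 2 * (4 * e1 ^ 3)) := by
            rw [← ENNReal.ofReal_natCast, ← ENNReal.ofReal_mul (by positivity), hexpeq]
            exact ENNReal.ofReal_le_ofReal
              (mul_le_mul_of_nonneg_right hcardF (by positivity))
      _ ≤ ENNReal.ofReal (100 * (1 + u) * e1) := by
            refine ENNReal.ofReal_le_ofReal ?_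
            have h9 : (1 + u) * e1 ^ 2 ≤ 1 := by nlinarith
            calc (5 * (1 + u)) ^ 2 * (4 * e1 ^ 3)
                = (100 * (1 + u) * e1) * ((1 + u) * e1 ^ 2) := by ring
            _ ≤ (100 * (1 + u) * e1) * 1 :=
                mul_le_mul_of_nonneg_left h9 (by positivity)
            _ = 100 * (1 + u) * e1 := mul_one _

end
end
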